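/- Let μ₀ be an eligibility-compliant matching of maximum cardinality in a reserve system, and let μ be a matching obtained from μ₀ by a finite (possibly empty) sequence of swap steps such that μ is terminal. Then μ is eligibility-compliant, respects priorities, is non-wasteful, and has maximum cardinality. -/

import Mathlib

open Finset

variable {I C : Type*}

/-- Agent `i` is eligible for category `c` when `i ≻_c ∅`. -/
def Eligible (prio : C → Option I → Option I → Prop) (i : I) (c : C) : Prop :=
  prio c (some i) none

/-- `μ` is a matching: the set of agents assigned to each category `c`
has at most `q c` elements. -/
def IsMatching [Fintype I] [DecidableEq C] (q : C → ℕ) (μ : I → Option C) : Prop :=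
  ∀ c : C, (Finset.univ.filter (fun i => μ i = some c)).card ≤ q c

/-- `μ` is eligibility-compliant: assigned agents are eligible. -/
def Compliant (prio : C → Option I → Option I → Prop) (μ : I → Option C) : Prop :=
  ∀ (i : I) (c : C), μ i = some c → Eligible prio i c

/-- The number of agents matched under `μ`. -/
def matchedCount [Fintype I] (μ : I → Option C) : ℕ :=
  (Finset.univ.filter (fun i => (μ i).isSome)).card

/-- `μ` has maximum cardinality among eligibility-compliant matchings. -/
def MaxCard [Fintype I] [DecidableEq C] (q : C → ℕ)
    (prio : C → Option I → Option I → Prop) (μ : I → Option C) : Prop :=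
  ∀ μ' : I → Option C, IsMatching q μ' → Compliant prio μ' →
    matchedCount μ' ≤ matchedCount μ

/-- Non-wastefulness: an eligible unmatched agent implies the category is full. -/
def NonWasteful [Fintype I] [DecidableEq C] (q : C → ℕ)
    (prio : C → Option I → Option I → Prop) (μ : I → Option C) : Prop :=
  ∀ (i : I) (c : C), Eligible prio i c → μ i = none →
    (Finset.univ.filter (fun j => μ j = some c)).card = q c

/-- Respect for priorities: a matched agent has higher priority (at its
category) than every unmatched agent. -/
def RespectsPriorities (prio : C → Option I → Option I → Prop)
    (μ : I → Option C) : Prop :=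
  ∀ (i i' : I) (c : C), μ i = some c → μ i' = none → prio c (some i) (some i')

/-- `μ'` is obtained from `μ` by a swap step at category `c`: an unmatched
agent `i`, eligible for `c`, replaces the `≻_c`-least agent `i'` currently
assigned to `c`, where `i ≻_c i'`. -/
def SwapStep (prio : C → Option I → Option I → Prop) (c : C)
    (μ μ' : I → Option C) : Prop :=
  ∃ i i' : I,
    μ i = none ∧ Eligible prio i c ∧
    μ i' = some c ∧
    (∀ j : I, μ j = some c → j ≠ i' → prio c (some j) (some i')) ∧
    prio c (some i) (some i') ∧
    μ' i = some c ∧ μ' i' = none ∧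
    (∀ j : I, j ≠ i → j ≠ i' → μ' j = μ j)

/-- One swap step between eligibility-compliant matchings. -/
def SwapRel [Fintype I] [DecidableEq C] (q : C → ℕ)
    (prio : C → Option I → Option I → Prop) (μ μ' : I → Option C) : Prop :=
  IsMatching q μ ∧ Compliant prio μ ∧ IsMatching q μ' ∧ Compliant prio μ' ∧
    ∃ c : C, SwapStep prio c μ μ'

/-- `μ` is terminal: no swap step applies to `μ`. -/
def Terminal (prio : C → Option I → Option I → Prop) (μ : I → Option C) : Prop :=
  ¬ ∃ (i i' : I) (c : C),
      μ i = none ∧ Eligible prio i c ∧ μ i' = some c ∧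
      (∀ j : I, μ j = some c → j ≠ i' → prio c (some j) (some i')) ∧
      prio c (some i) (some i')

/-- The strict part `▷` of the precedence preorder, extended to `C ∪ {∅}`
by `c ▷ ∅` for every category `c`. -/
def StrictPrec (prec : C → C → Prop) : Option C → Option C → Prop
  | some c, some c' => prec c c' ∧ ¬ prec c' c
  | some _, none => True
  | none, _ => False

/-- The number of agents assigned to preferential treatment categories. -/
def benefCount [Fintype I] [DecidableEq C] (Cstar : Finset C)
    (μ : I → Option C) : ℕ :=
  ∑ c ∈ Cstar, (Finset.univ.filter (fun i => μ i = some c)).card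

/-- `μ` is a maximum beneficiary assignment. -/
def MaxBenef [Fintype I] [DecidableEq C] (q : C → ℕ)
    (prio : C → Option I → Option I → Prop) (Cstar : Finset C)
    (μ : I → Option C) : Prop :=
  ∀ μ' : I → Option C, IsMatching q μ' → Compliant prio μ' →
    benefCount Cstar μ' ≤ benefCount Cstar μ

/-- Order preservation by swapping. -/
def OrderPresSwap (prio : C → Option I → Option I → Prop) (prec : C → C → Prop)
    (μ : I → Option C) : Prop :=
  ¬ ∃ (i j : I) (ci cj : C),
      μ i = some ci ∧ μ j = some cj ∧
      StrictPrec prec (some cj) (some ci) ∧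
      prio cj (some i) (some j) ∧
      Eligible prio j ci ∧ Eligible prio i cj

/-- Respect for precedence over categories. -/
def RespectsPrec [Fintype I] [DecidableEq C] (q : C → ℕ)
    (prio : C → Option I → Option I → Prop) (Cstar : Finset C)
    (prec : C → C → Prop) (μ : I → Option C) : Prop :=
  ¬ ∃ (i j : I) (cj : C),
      μ j = some cj ∧
      StrictPrec prec (some cj) (μ i) ∧
      prio cj (some i) (some j) ∧
      ∃ μ' : I → Option C,
        IsMatching q μ' ∧ Compliant prio μ' ∧
        (∀ (k : I) (ck : C), μ k = some ck →
          StrictPrec prec (some ck) (some cj) → μ' k = μ k) ∧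
        (∀ ℓ : I, μ ℓ = some cj → prio cj (some ℓ) (some i) → μ' ℓ = μ ℓ) ∧
        μ' i = some cj ∧
        MaxCard q prio μ' ∧ MaxBenef q prio Cstar μ'

/-- Order preservation for a hybrid sequential reserve system with open
categories `c01` (processed first) and `c02` (processed last). -/
def OrderPresHybrid (prio : C → Option I → Option I → Prop) (Cstar : Finset C)
    (c01 c02 : C) (μ : I → Option C) : Prop :=
  ∀ (i j : I) (cj : C), μ j = some cj → prio cj (some i) (some j) →
    ((∀ ci : C, μ i = some ci → (ci ∈ Cstar ∨ ci = c02) →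
        Eligible prio j ci → cj ≠ c01) ∧
     ((cj ∈ Cstar ∨ cj = c01) → Eligible prio i cj → μ i ≠ some c02))

/-- `P'` is an `i`-improvement of `P`: the orders agree off `i`, and `i`'s
priority weakly increases in every category. -/
def Improves (i : I) (P P' : C → Option I → Option I → Prop) : Prop :=
  ∀ c : C,
    (∀ x y : Option I, x ≠ some i → y ≠ some i → (P' c x y ↔ P c x y)) ∧
    (∀ x : Option I, x ≠ some i → P c (some i) x → P' c (some i) x)

lemma exists_least_aux [DecidableEq I] (r : Option I → Option I → Prop)
    (htri : ∀ x y, r x y ∨ x = y ∨ r y x)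
    (htr : ∀ {x y z}, r x y → r y z → r x z)
    (s : Finset I) (hs : s.Nonempty) :
    ∃ m ∈ s, ∀ j ∈ s, j ≠ m → r (some j) (some m) := by
  induction s using Finset.induction_on with
  | empty => exact absurd hs (by simp)
  | @insert a s ha ih =>
    by_cases h : s.Nonempty
    · obtain ⟨m, hm, hmin⟩ := ih h
      have ham : a ≠ m := fun e => ha (e ▸ hm)
      rcases htri (some a) (some m) with ham' | he | hma
      · refine ⟨m, Finset.mem_insert_of_mem hm, ?_⟩
        intro j hj hjm
        rcases Finset.mem_insert.mp hj with rfl | hj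
        · exact ham'
        · exact hmin j hj hjm
      · exact absurd (Option.some.inj he) ham
      · refine ⟨a, Finset.mem_insert_self a s, ?_⟩
        intro j hj hja
        rcases Finset.mem_insert.mp hj with rfl | hj
        · exact absurd rfl hja
        · by_cases hjm : j = m
          · exact hjm ▸ hma
          · exact htr (hmin j hj hjm) hma
    · have : s = ∅ := Finset.not_nonempty_iff_eq_empty.mp h
      subst this
      exact ⟨a, Finset.mem_insert_self a ∅, by simp⟩

lemma swapstep_count {I C : Type*} [Fintype I] [DecidableEq C]
    {prio : C → Option I → Option I → Prop} {c : C} {μ μ' : I → Option C}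
    (h : SwapStep prio c μ μ') : matchedCount μ' = matchedCount μ := by
  classical
  obtain ⟨i, i', hi, _, hi', _, _, h'i, h'i', hoff⟩ := h
  have hne : i ≠ i' := fun e => by rw [e, hi'] at hi; exact absurd hi (by simp)
  unfold matchedCount
  have hset : (Finset.univ.filter (fun j => (μ' j).isSome)) =
      insert i ((Finset.univ.filter (fun j => (μ j).isSome)).erase i') := by
    ext j
    simp only [Finset.mem_insert, Finset.mem_erase, Finset.mem_filter,
      Finset.mem_univ, true_and]
    by_cases hji : j = i
    · subst hji; simp [h'i]
    · by_cases hji' : j = i'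
      · subst hji'; simp [h'i', hji, hi']
      · rw [hoff j hji hji']; tauto
  rw [hset]
  have hinotin : i ∉ (Finset.univ.filter (fun j => (μ j).isSome)).erase i' := by
    simp [hi]
  rw [Finset.card_insert_of_notMem hinotin,
    Finset.card_erase_of_mem (by simp [hi'])]
  have hpos : 0 < (Finset.univ.filter (fun j => (μ j).isSome)).card :=
    Finset.card_pos.mpr ⟨i', by simp [hi']⟩
  omega

lemma reach_inv {I C : Type*} [Fintype I] [DecidableEq C]
    {q : C → ℕ} {prio : C → Option I → Option I → Prop} {μ₀ μ : I → Option C}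
    (hμ₀ : IsMatching q μ₀) (hμ₀c : Compliant prio μ₀)
    (hreach : Relation.ReflTransGen (SwapRel q prio) μ₀ μ) :
    (IsMatching q μ ∧ Compliant prio μ) ∧ matchedCount μ = matchedCount μ₀ := by
  induction hreach with
  | refl => exact ⟨⟨hμ₀, hμ₀c⟩, rfl⟩
  | tail _ h ih =>
    obtain ⟨_, _, hm, hc, c, hs⟩ := h
    exact ⟨⟨hm, hc⟩, (swapstep_count hs).trans ih.2⟩

/-- Starting from an eligibility-compliant matching of maximum
cardinality, any terminal matching reached by finitely many swap steps is
eligibility-compliant, respects priorities, is non-wasteful, and has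
maximum cardinality. -/
theorem terminal_swap_reachable_satisfies_axioms
    [Fintype I] [Fintype C] [DecidableEq C]
    (q : C → ℕ) (prio : C → Option I → Option I → Prop)
    (hstrict : ∀ c : C, IsStrictTotalOrder (Option I) (prio c))
    (μ₀ μ : I → Option C)
    (hμ₀ : IsMatching q μ₀) (hμ₀c : Compliant prio μ₀)
    (hμ₀max : MaxCard q prio μ₀)
    (hreach : Relation.ReflTransGen (SwapRel q prio) μ₀ μ)
    (hterm : Terminal prio μ) :
    IsMatching q μ ∧ Compliant prio μ ∧ RespectsPriorities prio μ ∧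
      NonWasteful q prio μ ∧ MaxCard q prio μ := by
  classical
  obtain ⟨⟨hμm, hμc⟩, hcount⟩ := reach_inv hμ₀ hμ₀c hreach
  have hmax : MaxCard q prio μ := fun μ' h1 h2 => hcount ▸ hμ₀max μ' h1 h2
  have htri : ∀ c x y, prio c x y ∨ x = y ∨ prio c y x := fun c =>
    fun x y => by
      by_cases h1 : prio c x y
      · exact Or.inl h1
      by_cases h2 : prio c y x
      · exact Or.inr (Or.inr h2)
      exact Or.inr (Or.inl ((hstrict c).trichotomous x y h1 h2))
  have htr : ∀ c {x y z : Option I}, prio c x y → prio c y z → prio c x z :=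
    fun c {x y z} h1 h2 => (hstrict c).toIsStrictOrder.toIsTrans.trans x y z h1 h2
  refine ⟨hμm, hμc, ?_, ?_, hmax⟩
  · -- respects priorities
    intro i i' c hi hi'
    rcases htri c (some i) (some i') with h | he | h
    · exact h
    · exact absurd (Option.some.inj he ▸ hi') (by rw [hi]; simp)
    · -- i' beats i, so a swap would apply: contradiction with terminality
      exfalso
      have helig : Eligible prio i' c := htr c h (hμc i c hi)
      obtain ⟨m, hm, hmin⟩ := exists_least_aux (prio c) (htri c) (htr c)
        (Finset.univ.filter (fun j => μ j = some c))
        ⟨i, by simp [hi]⟩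
      have hmc : μ m = some c := (Finset.mem_filter.mp hm).2
      have him : prio c (some i') (some m) := by
        by_cases he : i = m
        · exact he ▸ h
        · exact htr c h (hmin i (by simp [hi]) he)
      exact hterm ⟨i', m, c, hi', helig, hmc,
        fun j hj hjm => hmin j (by simp [hj]) hjm, him⟩
  · -- non-wasteful via maximum cardinality
    intro i c helig hi
    by_contra hne
    have hlt : (Finset.univ.filter (fun j => μ j = some c)).card < q c :=
      lt_of_le_of_ne (hμm c) hne
    set μ' : I → Option C := fun j => if j = i then some c else μ j with hμ'
    have h'm : IsMatching q μ' := by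
      intro c'
      by_cases hcc : c' = c
      · rw [hcc]
        have : (Finset.univ.filter (fun j => μ' j = some c)) =
            insert i (Finset.univ.filter (fun j => μ j = some c)) := by
          ext j
          simp only [Finset.mem_insert, Finset.mem_filter, Finset.mem_univ,
            true_and]
          by_cases hji : j = i <;> simp [hμ', hji]
        rw [this, Finset.card_insert_of_notMem (by simp [hi])]
        omega
      · have : (Finset.univ.filter (fun j => μ' j = some c')) =
            (Finset.univ.filter (fun j => μ j = some c')) := by
          ext j
          simp only [Finset.mem_filter, Finset.mem_univ, true_and]
          by_cases hji : j = i
          · subst hji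
            simp only [hμ', if_pos rfl, hi]
            constructor
            · intro h; exact absurd (Option.some.inj h).symm hcc
            · intro h; exact absurd h (by simp)
          · simp [hμ', hji]
        rw [this]; exact hμm c'
    have h'c : Compliant prio μ' := by
      intro j c' hj
      by_cases hji : j = i
      · subst hji
        simp only [hμ', if_pos rfl] at hj
        exact (Option.some.inj hj) ▸ helig
      · exact hμc j c' (by simpa [hμ', hji] using hj)
    have hgt : matchedCount μ < matchedCount μ' := by
      unfold matchedCount
      apply Finset.card_lt_card
      constructor
      · intro j hj
        simp only [Finset.mem_filter, Finset.mem_univ, true_and] at hj ⊢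
        by_cases hji : j = i
        · subst hji; simp [hμ']
        · simpa [hμ', hji] using hj
      · intro hsub
        have := hsub (by simp [hμ', hi] : i ∈ Finset.univ.filter (fun j => (μ' j).isSome))
        simp [hi] at this
    exact absurd (hmax μ' h'm h'c) (not_le.mpr hgt)
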